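/- Let μ be an atomless Borel probability measure on the interval [0,1] and set M(x) = μ([0, x]). Let u, v : [0,1] → ℝ be Lebesgue integrable, let c_f, c_g ∈ ℝ, and define f(x) = c_f + ∫₀ˣ u(y) dy and g(x) = c_g + ∫₀ˣ v(y) dy. If ∫₀¹ f dμ = 0 and ∫₀¹ g dμ = 0, then ∫₀¹ f(x) g(x) dμ(x) = ∫₀¹ ∫₀¹ (M(min(y, z)) − M(y)·M(z)) · u(y) · v(z) dy dz. -/

import Mathlib

open MeasureTheory Set

/-- Covariance kernel identity: for an atomless Borel probability
measure `μ` on `[0,1]` with CDF `M`, and absolutely continuous `f = c_f + ∫₀˙ u`,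
`g = c_g + ∫₀˙ v` with `∫ f dμ = ∫ g dμ = 0`,
`∫ f g dμ = ∫₀¹∫₀¹ (M(y∧z) − M(y)M(z)) u(y) v(z) dy dz`. -/
theorem stmt_4 (μ : Measure ℝ) [IsProbabilityMeasure μ] [NullSingletonClass μ]
    (hμsupp : μ (Icc (0 : ℝ) 1)ᶜ = 0)
    (u v : ℝ → ℝ) (hu : IntegrableOn u (Icc (0 : ℝ) 1)) (hv : IntegrableOn v (Icc (0 : ℝ) 1))
    (cf cg : ℝ) (f g M : ℝ → ℝ)
    (hf : ∀ x, f x = cf + ∫ y in (0 : ℝ)..x, u y)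
    (hg : ∀ x, g x = cg + ∫ y in (0 : ℝ)..x, v y)
    (hM : ∀ x, M x = (μ (Icc 0 x)).toReal)
    (hfmean : ∫ x, f x ∂μ = 0) (hgmean : ∫ x, g x ∂μ = 0) :
    ∫ x, f x * g x ∂μ =
      ∫ y in Icc (0 : ℝ) 1, ∫ z in Icc (0 : ℝ) 1,
        (M (min y z) - M y * M z) * u y * v z := by
  set P := (volume : Measure ℝ).restrict (Icc (0:ℝ) 1) with hPdef
  haveI hPprob : IsProbabilityMeasure P := ⟨by
    simp [hPdef, Real.volume_Icc]⟩
  have huP : Integrable u P := hu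
  have hvP : Integrable v P := hv
  obtain ⟨u', hu'meas, huu'⟩ : ∃ w, Measurable w ∧ u =ᵐ[P] w :=
    ⟨huP.1.mk u, huP.1.stronglyMeasurable_mk.measurable, huP.1.ae_eq_mk⟩
  obtain ⟨v', hv'meas, hvv'⟩ : ∃ w, Measurable w ∧ v =ᵐ[P] w :=
    ⟨hvP.1.mk v, hvP.1.stronglyMeasurable_mk.measurable, hvP.1.ae_eq_mk⟩
  have hU : Integrable u' P := huP.congr huu'
  have hV : Integrable v' P := hvP.congr hvv'
  have haex : ∀ᵐ x ∂μ, x ∈ Icc (0:ℝ) 1 := by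
    rw [ae_iff]; exact hμsupp
  have hres : μ.restrict (Icc (0:ℝ) 1) = μ :=
    Measure.restrict_eq_self_of_ae_mem haex
  -- basic facts about M
  have hMm : Measurable M := by
    have hmono : Monotone M := fun a b hab => by
      rw [hM a, hM b]
      exact ENNReal.toReal_mono (measure_ne_top μ _)
        (measure_mono (Icc_subset_Icc le_rfl hab))
    exact hmono.measurable
  have hM0 : ∀ y, 0 ≤ M y := fun y => by rw [hM]; exact ENNReal.toReal_nonneg
  have hM1 : ∀ y, M y ≤ 1 := fun y => by
    rw [hM, ← ENNReal.toReal_one]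
    exact ENNReal.toReal_mono ENNReal.one_ne_top prob_le_one
  have hIio : ∀ y ∈ Icc (0:ℝ) 1, (μ (Iio y)).toReal = M y := by
    intro y hy
    rw [hM]
    congr 1
    have h1 : μ (Iio y) = μ (Iic y) := measure_congr Iio_ae_eq_Iic
    have h2 : μ (Iic y) ≤ μ (Icc 0 y) := by
      calc μ (Iic y) ≤ μ (Icc 0 y ∪ (Icc (0:ℝ) 1)ᶜ) := measure_mono (fun x hx => by
            by_cases hx0 : x ∈ Icc (0:ℝ) 1
            · exact Or.inl ⟨hx0.1, hx⟩
            · exact Or.inr hx0)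
        _ ≤ μ (Icc 0 y) + μ ((Icc (0:ℝ) 1)ᶜ) := measure_union_le _ _
        _ = μ (Icc 0 y) := by rw [hμsupp, add_zero]
    rw [h1]
    exact le_antisymm h2 (measure_mono Icc_subset_Iic_self)
  -- integrals of indicators against μ
  have hiInd : ∀ c : ℝ, Integrable (fun x => if x < c then (1:ℝ) else 0) μ := by
    intro c
    have he : (fun x => if x < c then (1:ℝ) else 0) = (Iio c).indicator (fun _ => (1:ℝ)) := by
      funext x; simp [Set.indicator_apply, Set.mem_Iio]
    rw [he]; exact (integrable_const 1).indicator measurableSet_Iio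
  have hind_lt : ∀ y ∈ Icc (0:ℝ) 1, ∫ x, (if x < y then (1:ℝ) else 0) ∂μ = M y := by
    intro y hy
    have he : (fun x => if x < y then (1:ℝ) else 0) = (Iio y).indicator (fun _ => (1:ℝ)) := by
      funext x; simp [Set.indicator_apply, Set.mem_Iio]
    rw [he, integral_indicator measurableSet_Iio, setIntegral_const, smul_eq_mul, mul_one,
      measureReal_def, hIio y hy]
  have hind_ge : ∀ y ∈ Icc (0:ℝ) 1, ∫ x, (if y ≤ x then (1:ℝ) else 0) ∂μ = 1 - M y := by
    intro y hy
    have he : (fun x => if y ≤ x then (1:ℝ) else 0)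
        = fun x => 1 - (if x < y then (1:ℝ) else 0) := by
      funext x
      by_cases h : x < y
      · rw [if_pos h, if_neg (not_le.2 h)]; ring
      · rw [if_neg h, if_pos (not_lt.1 h)]; ring
    rw [he, integral_sub (integrable_const 1) (hiInd y), integral_const, hind_lt y hy]
    simp
  -- kernels
  set J : ℝ → ℝ → ℝ := fun x y => if y ≤ x then 1 else 0 with hJdef
  set K : ℝ → ℝ → ℝ := fun x y => M y - (if x < y then 1 else 0) with hKdef
  have hJabs : ∀ x y, |J x y| ≤ 1 := fun x y => by
    simp only [hJdef]; split_ifs <;> simp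
  have hKabs : ∀ x y, |K x y| ≤ 1 := fun x y => by
    simp only [hKdef]
    have h0 := hM0 y; have h1 := hM1 y
    rw [abs_le]
    split_ifs <;> constructor <;> linarith
  have hJm : Measurable (fun q : ℝ × ℝ => J q.1 q.2) := by
    simp only [hJdef]
    exact Measurable.ite (measurableSet_le measurable_snd measurable_fst)
      measurable_const measurable_const
  have hKm : Measurable (fun q : ℝ × ℝ => K q.1 q.2) := by
    simp only [hKdef]
    exact (hMm.comp measurable_snd).sub
      (Measurable.ite (measurableSet_lt measurable_fst measurable_snd)
        measurable_const measurable_const)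
  have hJmy : ∀ x, Measurable (fun y => J x y) :=
    fun x => hJm.comp (measurable_const.prodMk measurable_id)
  have hKmy : ∀ x, Measurable (fun y => K x y) :=
    fun x => hKm.comp (measurable_const.prodMk measurable_id)
  -- primitive as a kernel integral
  have keyJ : ∀ (w w' : ℝ → ℝ), w =ᵐ[P] w' → ∀ x ∈ Icc (0:ℝ) 1,
      (∫ y in (0:ℝ)..x, w y) = ∫ y, J x y * w' y ∂P := by
    intro w w' hww' x hx
    rw [intervalIntegral.integral_of_le hx.1]
    have h1 : ∫ y in Ioc (0:ℝ) x, w y = ∫ y in Ioc (0:ℝ) x, w' y :=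
      integral_congr_ae (ae_restrict_of_ae_restrict_of_subset
        (Ioc_subset_Icc_self.trans (Icc_subset_Icc le_rfl hx.2)) hww')
    have h2 : (fun y => J x y * w' y) = (Iic x).indicator w' := by
      funext y
      simp only [hJdef, Set.indicator_apply, Set.mem_Iic]
      by_cases h : y ≤ x
      · rw [if_pos h, if_pos h, one_mul]
      · rw [if_neg h, if_neg h, zero_mul]
    have h3 : Iic x ∩ Icc (0:ℝ) 1 = Icc 0 x := by
      ext t
      simp only [mem_inter_iff, mem_Iic, mem_Icc]
      constructor
      · rintro ⟨ha, hb, _⟩; exact ⟨hb, ha⟩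
      · rintro ⟨ha, hb⟩; exact ⟨hb, ha, hb.trans hx.2⟩
    rw [h1, h2, hPdef, integral_indicator measurableSet_Iic,
      Measure.restrict_restrict measurableSet_Iic, h3, integral_Icc_eq_integral_Ioc]
  -- mean value identity
  have keyMean : ∀ (w w' : ℝ → ℝ) (c : ℝ) (F : ℝ → ℝ), w =ᵐ[P] w' → Integrable w' P →
      Measurable w' → (∀ x, F x = c + ∫ y in (0:ℝ)..x, w y) →
      ∫ x, F x ∂μ = c + ∫ y, (1 - M y) * w' y ∂P := by
    intro w w' c F hww' hW hWm hF
    have hint : Integrable (Function.uncurry fun x y => J x y * w' y) (μ.prod P) := by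
      have hb : Integrable (fun q : ℝ × ℝ => (1:ℝ) * |w' q.2|) (μ.prod P) :=
        (integrable_const 1).mul_prod hW.abs
      refine hb.mono' ((hJm.mul (hWm.comp measurable_snd)).aestronglyMeasurable)
        (Filter.Eventually.of_forall fun q => ?_)
      show |J q.1 q.2 * w' q.2| ≤ 1 * |w' q.2|
      rw [abs_mul, one_mul]
      calc |J q.1 q.2| * |w' q.2| ≤ 1 * |w' q.2| :=
            mul_le_mul_of_nonneg_right (hJabs _ _) (abs_nonneg _)
        _ = |w' q.2| := one_mul _
    have hstep1 : ∫ x, F x ∂μ = ∫ x, (c + ∫ y, J x y * w' y ∂P) ∂μ := by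
      refine integral_congr_ae ?_
      filter_upwards [haex] with x hx
      rw [hF x, keyJ w w' hww' x hx]
    have hIF : Integrable (fun x => ∫ y, J x y * w' y ∂P) μ := by
      exact hint.integral_prod_left
    rw [hstep1, integral_add (integrable_const c) hIF, integral_const,
      probReal_univ, one_smul]
    congr 1
    rw [integral_integral_swap hint]
    refine integral_congr_ae ?_
    have hyP : ∀ᵐ y ∂P, y ∈ Icc (0:ℝ) 1 := ae_restrict_mem measurableSet_Icc
    filter_upwards [hyP] with y hy
    rw [integral_mul_const]
    simp only [hJdef]
    rw [hind_ge y hy]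
  -- value of cf and cg
  have hcf : cf = -∫ y, (1 - M y) * u' y ∂P := by
    have := keyMean u u' cf f huu' hU hu'meas hf
    rw [hfmean] at this
    linarith
  have hcg : cg = -∫ y, (1 - M y) * v' y ∂P := by
    have := keyMean v v' cg g hvv' hV hv'meas hg
    rw [hgmean] at this
    linarith
  -- integrability of the bounded-kernel products over P
  have hMWint : ∀ (w' : ℝ → ℝ), Integrable w' P → Measurable w' →
      Integrable (fun y => (1 - M y) * w' y) P := by
    intro w' hW hWm
    refine hW.abs.mono' (((measurable_const.sub hMm).mul hWm).aestronglyMeasurable)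
      (Filter.Eventually.of_forall fun y => ?_)
    rw [Real.norm_eq_abs, abs_mul]
    have h0 := hM0 y; have h1 := hM1 y
    have : |1 - M y| ≤ 1 := by rw [abs_le]; constructor <;> linarith
    calc |1 - M y| * |w' y| ≤ 1 * |w' y| := mul_le_mul_of_nonneg_right this (abs_nonneg _)
      _ = |w' y| := one_mul _
  have hJWint : ∀ (x : ℝ) (w' : ℝ → ℝ), Integrable w' P → Measurable w' →
      Integrable (fun y => J x y * w' y) P := by
    intro x w' hW hWm
    refine hW.abs.mono' (((hJmy x).mul hWm).aestronglyMeasurable)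
      (Filter.Eventually.of_forall fun y => ?_)
    rw [Real.norm_eq_abs, abs_mul]
    calc |J x y| * |w' y| ≤ 1 * |w' y| := mul_le_mul_of_nonneg_right (hJabs _ _) (abs_nonneg _)
      _ = |w' y| := one_mul _
  -- the key representation of f and g
  have keyf : ∀ x ∈ Icc (0:ℝ) 1, f x = ∫ y, K x y * u' y ∂P := by
    intro x hx
    rw [hf x, keyJ u u' huu' x hx, hcf, neg_add_eq_sub,
      ← integral_sub (hJWint x u' hU hu'meas) (hMWint u' hU hu'meas)]
    refine integral_congr_ae (Filter.Eventually.of_forall fun y => ?_)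
    simp only [hJdef, hKdef]
    by_cases h : y ≤ x
    · rw [if_pos h, if_neg (not_lt.2 h)]; ring
    · rw [if_neg h, if_pos (not_le.1 h)]; ring
  have keyg : ∀ x ∈ Icc (0:ℝ) 1, g x = ∫ z, K x z * v' z ∂P := by
    intro x hx
    rw [hg x, keyJ v v' hvv' x hx, hcg, neg_add_eq_sub,
      ← integral_sub (hJWint x v' hV hv'meas) (hMWint v' hV hv'meas)]
    refine integral_congr_ae (Filter.Eventually.of_forall fun z => ?_)
    simp only [hJdef, hKdef]
    by_cases h : z ≤ x
    · rw [if_pos h, if_neg (not_lt.2 h)]; ring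
    · rw [if_neg h, if_pos (not_le.1 h)]; ring
  -- inner covariance computation
  have hinner : ∀ y ∈ Icc (0:ℝ) 1, ∀ z ∈ Icc (0:ℝ) 1,
      ∫ x, (K x y * u' y) * (K x z * v' z) ∂μ
        = (M (min y z) - M y * M z) * u' y * v' z := by
    intro y hy z hz
    have hmin : min y z ∈ Icc (0:ℝ) 1 := ⟨le_min hy.1 hz.1, (min_le_left _ _).trans hy.2⟩
    have hexp : ∀ x, K x y * K x z =
        M y * M z - M y * (if x < z then (1:ℝ) else 0) - M z * (if x < y then (1:ℝ) else 0)
          + (if x < min y z then (1:ℝ) else 0) := by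
      intro x
      simp only [hKdef]
      by_cases h1 : x < y <;> by_cases h2 : x < z
      · rw [if_pos h1, if_pos h2, if_pos (lt_min h1 h2)]; ring
      · rw [if_pos h1, if_neg h2, if_neg (by simp [lt_min_iff, h2])]; ring
      · rw [if_neg h1, if_pos h2, if_neg (by simp [lt_min_iff, h1])]; ring
      · rw [if_neg h1, if_neg h2, if_neg (by simp [lt_min_iff, h1])]; ring
    have hKK : ∫ x, K x y * K x z ∂μ = M (min y z) - M y * M z := by
      have h1 : Integrable (fun x => M z * (if x < y then (1:ℝ) else 0)) μ :=
        (hiInd y).const_mul (M z)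
      have h2 : Integrable (fun x => M y * (if x < z then (1:ℝ) else 0)) μ :=
        (hiInd z).const_mul (M y)
      have h3 := hiInd (min y z)
      have hB : Integrable (fun x => M y * M z - M y * (if x < z then (1:ℝ) else 0)) μ :=
        (integrable_const _).sub h2
      have hA : Integrable (fun x => M y * M z - M y * (if x < z then (1:ℝ) else 0)
          - M z * (if x < y then (1:ℝ) else 0)) μ := hB.sub h1
      calc ∫ x, K x y * K x z ∂μ
          = ∫ x, (M y * M z - M y * (if x < z then (1:ℝ) else 0)
              - M z * (if x < y then (1:ℝ) else 0) + (if x < min y z then (1:ℝ) else 0)) ∂μ :=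
            integral_congr_ae (Filter.Eventually.of_forall fun x => hexp x)
        _ = M y * M z - M y * M z - M z * M y + M (min y z) := by
            rw [integral_add hA h3, integral_sub hB h1,
              integral_sub (integrable_const _) h2,
              integral_const, probReal_univ, one_smul,
              integral_const_mul, integral_const_mul,
              hind_lt y hy, hind_lt z hz, hind_lt (min y z) hmin]
        _ = M (min y z) - M y * M z := by ring
    calc ∫ x, (K x y * u' y) * (K x z * v' z) ∂μ
        = ∫ x, (K x y * K x z) * (u' y * v' z) ∂μ := by
          refine integral_congr_ae (Filter.Eventually.of_forall fun x => ?_); ring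
      _ = (∫ x, K x y * K x z ∂μ) * (u' y * v' z) := integral_mul_const _ _
      _ = (M (min y z) - M y * M z) * u' y * v' z := by rw [hKK]; ring
  -- the big integrability facts
  have hint2 : Integrable
      (Function.uncurry fun x (p : ℝ × ℝ) => (K x p.1 * u' p.1) * (K x p.2 * v' p.2))
      (μ.prod (P.prod P)) := by
    have hb : Integrable (fun q : ℝ × (ℝ × ℝ) => (1:ℝ) * (|u' q.2.1| * |v' q.2.2|))
        (μ.prod (P.prod P)) :=
      (integrable_const 1).mul_prod (hU.abs.mul_prod hV.abs)
    have hmeas : Measurable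
        (fun q : ℝ × (ℝ × ℝ) => (K q.1 q.2.1 * u' q.2.1) * (K q.1 q.2.2 * v' q.2.2)) := by
      refine Measurable.mul (Measurable.mul ?_ (hu'meas.comp (measurable_fst.comp measurable_snd)))
        (Measurable.mul ?_ (hv'meas.comp (measurable_snd.comp measurable_snd)))
      · exact hKm.comp (measurable_fst.prodMk (measurable_fst.comp measurable_snd))
      · exact hKm.comp (measurable_fst.prodMk (measurable_snd.comp measurable_snd))
    refine hb.mono' hmeas.aestronglyMeasurable (Filter.Eventually.of_forall fun q => ?_)
    show |K q.1 q.2.1 * u' q.2.1 * (K q.1 q.2.2 * v' q.2.2)| ≤ 1 * (|u' q.2.1| * |v' q.2.2|)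
    rw [abs_mul, abs_mul, abs_mul, one_mul]
    calc |K q.1 q.2.1| * |u' q.2.1| * (|K q.1 q.2.2| * |v' q.2.2|)
        ≤ 1 * |u' q.2.1| * (1 * |v' q.2.2|) := by
          gcongr
          · exact hKabs _ _
          · exact hKabs _ _
      _ = |u' q.2.1| * |v' q.2.2| := by ring
  have hint3 : Integrable
      (fun p : ℝ × ℝ => (M (min p.1 p.2) - M p.1 * M p.2) * u' p.1 * v' p.2) (P.prod P) := by
    have hb : Integrable (fun p : ℝ × ℝ => |u' p.1| * |v' p.2|) (P.prod P) :=
      hU.abs.mul_prod hV.abs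
    have hmeas : Measurable
        (fun p : ℝ × ℝ => (M (min p.1 p.2) - M p.1 * M p.2) * u' p.1 * v' p.2) :=
      (((hMm.comp (measurable_fst.min measurable_snd)).sub
        ((hMm.comp measurable_fst).mul (hMm.comp measurable_snd))).mul
          (hu'meas.comp measurable_fst)).mul (hv'meas.comp measurable_snd)
    refine hb.mono' hmeas.aestronglyMeasurable (Filter.Eventually.of_forall fun p => ?_)
    rw [Real.norm_eq_abs, abs_mul, abs_mul]
    have hA : |M (min p.1 p.2) - M p.1 * M p.2| ≤ 1 := by
      have := hM0 (min p.1 p.2); have := hM1 (min p.1 p.2)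
      have h0 : 0 ≤ M p.1 * M p.2 := mul_nonneg (hM0 _) (hM0 _)
      have h1 : M p.1 * M p.2 ≤ 1 := mul_le_one₀ (hM1 _) (hM0 _) (hM1 _)
      rw [abs_le]; constructor <;> linarith
    calc |M (min p.1 p.2) - M p.1 * M p.2| * |u' p.1| * |v' p.2|
        ≤ 1 * |u' p.1| * |v' p.2| := by
          gcongr
      _ = |u' p.1| * |v' p.2| := by ring
  -- a.e. membership for the product
  have hPP : ∀ᵐ p : ℝ × ℝ ∂(P.prod P), p ∈ (Icc (0:ℝ) 1) ×ˢ (Icc (0:ℝ) 1) := by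
    rw [hPdef, Measure.prod_restrict]
    exact ae_restrict_mem (measurableSet_Icc.prod measurableSet_Icc)
  -- the main computation
  calc ∫ x, f x * g x ∂μ
      = ∫ x, (∫ y, K x y * u' y ∂P) * (∫ z, K x z * v' z ∂P) ∂μ := by
        refine integral_congr_ae ?_
        filter_upwards [haex] with x hx
        rw [keyf x hx, keyg x hx]
    _ = ∫ x, ∫ p : ℝ × ℝ, (K x p.1 * u' p.1) * (K x p.2 * v' p.2) ∂(P.prod P) ∂μ := by
        refine integral_congr_ae (Filter.Eventually.of_forall fun x => ?_)
        exact (integral_prod_mul (fun y => K x y * u' y) (fun z => K x z * v' z)).symm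
    _ = ∫ p : ℝ × ℝ, ∫ x, (K x p.1 * u' p.1) * (K x p.2 * v' p.2) ∂μ ∂(P.prod P) :=
        integral_integral_swap hint2
    _ = ∫ p : ℝ × ℝ, (M (min p.1 p.2) - M p.1 * M p.2) * u' p.1 * v' p.2 ∂(P.prod P) := by
        refine integral_congr_ae ?_
        filter_upwards [hPP] with p hp
        exact hinner p.1 hp.1 p.2 hp.2
    _ = ∫ y, ∫ z, (M (min y z) - M y * M z) * u' y * v' z ∂P ∂P :=
        integral_prod _ hint3
    _ = ∫ y in Icc (0 : ℝ) 1, ∫ z in Icc (0 : ℝ) 1,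
          (M (min y z) - M y * M z) * u y * v z := by
        rw [← hPdef]
        refine integral_congr_ae ?_
        filter_upwards [huu'] with y hy
        refine integral_congr_ae ?_
        filter_upwards [hvv'] with z hz
        rw [hy, hz]
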